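/- Let N ≥ 1 and 0 ≤ k ≤ N, and let S be a uniformly random k-element subset of a finite set X with |X| = N. Then for any disjoint nonempty subsets A, B ⊆ X, the events {A ⊆ S} and {B ⊆ S} are negatively correlated: P(A ⊆ S and B ⊆ S) ≤ P(A ⊆ S) · P(B ⊆ S); equivalently, Cov(1{A ⊆ S}, 1{B ⊆ S}) ≤ 0. -/

import Mathlib

open Finset
open scoped Nat

/-- Splitting a descending factorial. -/
lemma descFactorial_add_split (n a c : ℕ) :
    Nat.descFactorial n (a + c) = Nat.descFactorial n a * Nat.descFactorial (n - a) c := by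
  simp only [Nat.descFactorial_eq_prod_range]
  rw [Finset.prod_range_add]
  congr 1
  refine Finset.prod_congr rfl fun i _ => ?_
  omega

/-- Core termwise product inequality. -/
lemma desc_core (n k a b : ℕ) (hkn : k ≤ n) :
    Nat.descFactorial n a * Nat.descFactorial (k - b) a ≤
      Nat.descFactorial (n - b) a * Nat.descFactorial k a := by
  simp only [Nat.descFactorial_eq_prod_range]
  rw [← Finset.prod_mul_distrib, ← Finset.prod_mul_distrib]
  refine Finset.prod_le_prod' fun i _ => ?_
  rcases le_or_gt k (b + i) with h | h
  · have : k - b - i = 0 := by omega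
    simp [this]
  · have h1 : b + i ≤ k := le_of_lt h
    have h2 : b + i ≤ n := le_trans h1 hkn
    have h3 : i ≤ k := by omega
    have h4 : i ≤ n := by omega
    zify [h1, h2, h3, h4, Nat.sub_sub]
    nlinarith [mul_nonneg (Int.ofNat_nonneg b) (sub_nonneg.2 (Int.ofNat_le.2 hkn))]

/-- The key binomial coefficient inequality. -/
lemma choose_neg_corr (n k a b : ℕ) (hab : a + b ≤ k) (hkn : k ≤ n) :
    Nat.choose (n - (a + b)) (k - (a + b)) * Nat.choose n k ≤
      Nat.choose (n - a) (k - a) * Nat.choose (n - b) (k - b) := by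
  have hF : 0 < (k - (a + b)) ! * k ! * ((k - a) ! * (k - b) !) :=
    Nat.mul_pos (Nat.mul_pos (Nat.factorial_pos _) (Nat.factorial_pos _))
      (Nat.mul_pos (Nat.factorial_pos _) (Nat.factorial_pos _))
  refine Nat.le_of_mul_le_mul_right ?_ hF
  have e1 : Nat.choose (n - (a + b)) (k - (a + b)) * Nat.choose n k *
      ((k - (a + b)) ! * k ! * ((k - a) ! * (k - b) !)) =
      (Nat.descFactorial (n - (a + b)) (k - (a + b)) * Nat.descFactorial n k) *
        ((k - a) ! * (k - b) !) := by
    rw [Nat.descFactorial_eq_factorial_mul_choose, Nat.descFactorial_eq_factorial_mul_choose]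
    ring
  have e2 : Nat.choose (n - a) (k - a) * Nat.choose (n - b) (k - b) *
      ((k - (a + b)) ! * k ! * ((k - a) ! * (k - b) !)) =
      (Nat.descFactorial (n - a) (k - a) * Nat.descFactorial (n - b) (k - b)) *
        ((k - (a + b)) ! * k !) := by
    rw [Nat.descFactorial_eq_factorial_mul_choose, Nat.descFactorial_eq_factorial_mul_choose]
    ring
  rw [e1, e2]
  -- split the descending factorials
  have s1 : Nat.descFactorial n k = Nat.descFactorial n a * Nat.descFactorial (n - a) (k - a) := by
    have : k = a + (k - a) := by omega
    rw [this, descFactorial_add_split]; congr 2 <;> omega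
  have s2 : Nat.descFactorial (n - b) (k - b) =
      Nat.descFactorial (n - b) a * Nat.descFactorial (n - (a + b)) (k - (a + b)) := by
    have : k - b = a + (k - (a + b)) := by omega
    rw [this, descFactorial_add_split]; congr 2 <;> omega
  have s3 : (k : ℕ) ! = Nat.descFactorial k a * (k - a) ! := by
    have h := descFactorial_add_split k a (k - a)
    rw [Nat.add_sub_cancel' (by omega : a ≤ k)] at h
    rw [← Nat.descFactorial_self k, h, Nat.descFactorial_self]
  have s4 : (k - b) ! = Nat.descFactorial (k - b) a * (k - (a + b)) ! := by
    have h := descFactorial_add_split (k - b) a (k - b - a)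
    rw [Nat.add_sub_cancel' (by omega : a ≤ k - b)] at h
    rw [← Nat.descFactorial_self (k - b), h, Nat.descFactorial_self]
    congr 2
    omega
  rw [s1, s2, s3, s4]
  have core := desc_core n k a b hkn
  calc Nat.descFactorial (n - (a + b)) (k - (a + b)) *
        (Nat.descFactorial n a * Nat.descFactorial (n - a) (k - a)) *
        ((k - a) ! * (Nat.descFactorial (k - b) a * (k - (a + b)) !))
      = (Nat.descFactorial (n - (a + b)) (k - (a + b)) * Nat.descFactorial (n - a) (k - a) *
          ((k - a) ! * (k - (a + b)) !)) *
          (Nat.descFactorial n a * Nat.descFactorial (k - b) a) := by ring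
    _ ≤ (Nat.descFactorial (n - (a + b)) (k - (a + b)) * Nat.descFactorial (n - a) (k - a) *
          ((k - a) ! * (k - (a + b)) !)) *
          (Nat.descFactorial (n - b) a * Nat.descFactorial k a) :=
        Nat.mul_le_mul_left _ core
    _ = Nat.descFactorial (n - a) (k - a) *
          (Nat.descFactorial (n - b) a * Nat.descFactorial (n - (a + b)) (k - (a + b))) *
          ((k - (a + b)) ! * (Nat.descFactorial k a * (k - a) !)) := by ring

/-- Counting k-subsets containing a fixed set A. -/
lemma count_superset {X : Type*} [Fintype X] [DecidableEq X] (A : Finset X) (k : ℕ)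
    (hak : A.card ≤ k) :
    (((Finset.univ : Finset X).powersetCard k).filter (fun s => A ⊆ s)).card =
      Nat.choose (Fintype.card X - A.card) (k - A.card) := by
  have hAu : A ⊆ (Finset.univ : Finset X) := Finset.subset_univ A
  rw [← Finset.card_univ, ← Finset.card_sdiff_of_subset hAu, ← Finset.card_powersetCard]
  refine Finset.card_nbij' (fun s => s \ A) (fun t => t ∪ A) ?_ ?_ ?_ ?_
  · intro s hs
    simp only [Finset.mem_coe, Finset.mem_filter, Finset.mem_powersetCard] at hs
    obtain ⟨⟨hsu, hsc⟩, hAs⟩ := hs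
    rw [Finset.mem_coe, Finset.mem_powersetCard]
    exact ⟨Finset.sdiff_subset_sdiff hsu (le_refl A), by rw [Finset.card_sdiff_of_subset hAs, hsc]⟩
  · intro t ht
    rw [Finset.mem_coe, Finset.mem_powersetCard] at ht
    obtain ⟨htu, htc⟩ := ht
    have hdisj : Disjoint t A := Finset.disjoint_of_subset_left htu (Finset.sdiff_disjoint)
    simp only [Finset.mem_coe, Finset.mem_filter, Finset.mem_powersetCard]
    refine ⟨⟨Finset.subset_univ _, ?_⟩, Finset.subset_union_right⟩
    rw [Finset.card_union_of_disjoint hdisj, htc]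
    omega
  · intro s hs
    simp only [Finset.mem_coe, Finset.mem_filter] at hs
    exact Finset.sdiff_union_of_subset hs.2
  · intro t ht
    rw [Finset.mem_coe, Finset.mem_powersetCard] at ht
    have hdisj : Disjoint t A := Finset.disjoint_of_subset_left ht.1 (Finset.sdiff_disjoint)
    show (t ∪ A) \ A = t
    rw [Finset.union_sdiff_distrib, Finset.sdiff_self, Finset.union_empty,
      Finset.sdiff_eq_self_iff_disjoint.2 hdisj]

/-- Negative correlation for uniformly random `k`-subsets: if `S` is uniform among the
`k`-element subsets of a finite set `X` and `A, B` are disjoint nonempty subsets of `X`,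
then `P(A ⊆ S ∧ B ⊆ S) ≤ P(A ⊆ S) · P(B ⊆ S)`, where each probability is the number of
favourable `k`-subsets divided by the total number of `k`-subsets. -/
theorem uniform_subset_negative_correlation {X : Type*} [Fintype X] [DecidableEq X]
    (k : ℕ) (hk : k ≤ Fintype.card X) (hN : 1 ≤ Fintype.card X)
    (A B : Finset X) (hA : A.Nonempty) (hB : B.Nonempty) (hAB : Disjoint A B) :
    ((((Finset.univ : Finset X).powersetCard k).filter (fun s => A ⊆ s ∧ B ⊆ s)).card : ℚ) /
        (((Finset.univ : Finset X).powersetCard k).card : ℚ) ≤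
      (((((Finset.univ : Finset X).powersetCard k).filter (fun s => A ⊆ s)).card : ℚ) /
          (((Finset.univ : Finset X).powersetCard k).card : ℚ)) *
        (((((Finset.univ : Finset X).powersetCard k).filter (fun s => B ⊆ s)).card : ℚ) /
          (((Finset.univ : Finset X).powersetCard k).card : ℚ)) := by
  set n := Fintype.card X with hn
  have hD : (0 : ℚ) < (((Finset.univ : Finset X).powersetCard k).card : ℚ) := by
    rw [Finset.card_powersetCard, Finset.card_univ, ← hn]
    exact_mod_cast Nat.choose_pos hk
  -- rewrite the joint event as a union event
  have hunion : (((Finset.univ : Finset X).powersetCard k).filter (fun s => A ⊆ s ∧ B ⊆ s)) =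
      (((Finset.univ : Finset X).powersetCard k).filter (fun s => A ∪ B ⊆ s)) := by
    refine Finset.filter_congr fun s _ => ?_
    simp [Finset.union_subset_iff]
  rw [hunion]
  rcases le_or_gt (A.card + B.card) k with hab | hab
  · -- main case
    have hAk : A.card ≤ k := by omega
    have hBk : B.card ≤ k := by omega
    have hABk : (A ∪ B).card ≤ k := by
      rw [Finset.card_union_of_disjoint hAB]; omega
    rw [count_superset A k hAk, count_superset B k hBk, count_superset (A ∪ B) k hABk,
      Finset.card_union_of_disjoint hAB]
    rw [div_mul_div_comm, div_le_div_iff₀ hD (by positivity)]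
    rw [Finset.card_powersetCard, Finset.card_univ, ← hn]
    have key := choose_neg_corr n k A.card B.card hab hk
    have hcast : ((Nat.choose (n - (A.card + B.card)) (k - (A.card + B.card)) *
        Nat.choose n k : ℕ) : ℚ) ≤
        ((Nat.choose (n - A.card) (k - A.card) * Nat.choose (n - B.card) (k - B.card) : ℕ) : ℚ) :=
      by exact_mod_cast key
    push_cast at hcast ⊢
    nlinarith [hD, hcast]
  · -- trivial case: event impossible
    have hempty : (((Finset.univ : Finset X).powersetCard k).filter (fun s => A ∪ B ⊆ s)) = ∅ := by
      rw [Finset.filter_eq_empty_iff]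
      intro s hs hsub
      rw [Finset.mem_powersetCard] at hs
      have := Finset.card_le_card hsub
      rw [Finset.card_union_of_disjoint hAB, hs.2] at this
      omega
    rw [hempty]
    simp only [Finset.card_empty, Nat.cast_zero, zero_div]
    positivity
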